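/- arXiv:2502.04652 — 4 statements merged into one kernel-verified Lean document; each statement's English description precedes it below -/
import Mathlib

section
/- Let Â = A + εB be a dual real n×n matrix with index of A equal to m, and let S = Σ_{i=1}^m A^{m-i} B A^{i-1}. Suppose the dual core-EP inverse Â^⊕ exists. Then Â^⊕ = A^⊕ − ε A^⊕ B A^⊕ if and only if (I − A^m (A^m)^†) S = O, where A^⊕ is the real core-EP inverse of A and (A^m)^† the Moore–Penrose inverse of A^m. -/
open Matrix

abbrev Mat (n : ℕ) := Matrix (Fin n) (Fin n) ℝ

/-- A dual matrix `A + ε B` represented as the pair `(A, B)`. -/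
abbrev DM (n : ℕ) := Mat n × Mat n

/-- Dual matrix multiplication: `(A+εB)(C+εD) = AC + ε(AD+BC)`. -/
def dmul {n : ℕ} (X Y : DM n) : DM n := (X.1 * Y.1, X.1 * Y.2 + X.2 * Y.1)

/-- Componentwise transpose of a dual matrix. -/
def dT {n : ℕ} (X : DM n) : DM n := (X.1ᵀ, X.2ᵀ)

/-- Powers of a dual matrix. -/
def dpow {n : ℕ} (X : DM n) : ℕ → DM n
  | 0 => (1, 0)
  | k+1 => dmul X (dpow X k)

/-- `m` is the index of `A`: the least `m` with `rank (A^(m+1)) = rank (A^m)`. -/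
def MatIndex {n : ℕ} (A : Mat n) (m : ℕ) : Prop :=
  (A ^ (m+1)).rank = (A ^ m).rank ∧ ∀ k < m, (A ^ (k+1)).rank ≠ (A ^ k).rank

/-- `X` is the core-EP inverse of `A` (with `m` the index of `A`). -/
def IsCEP {n : ℕ} (m : ℕ) (A X : Mat n) : Prop :=
  (A * X)ᵀ = A * X ∧ A * (X * X) = X ∧ X * A ^ (m+1) = A ^ m

/-- `Xh` is a dual core-EP inverse of the dual matrix `Ah`. -/
def IsDualCEP {n : ℕ} (m : ℕ) (Ah Xh : DM n) : Prop :=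
  dT (dmul Ah Xh) = dmul Ah Xh ∧ dmul Ah (dmul Xh Xh) = Xh ∧
    dmul Xh (dpow Ah (m+1)) = dpow Ah m

/-- `X` is the Moore-Penrose inverse of `M`. -/
def IsMP {n : ℕ} (M X : Mat n) : Prop :=
  M * X * M = M ∧ X * M * X = X ∧ (M * X)ᵀ = M * X ∧ (X * M)ᵀ = X * M

/-! ### Auxiliary lemmas -/

lemma ker_step {n m : ℕ} {A : Mat n} (hrk : (A ^ (m+1)).rank = (A ^ m).rank)
    (M : Mat n) (h0 : M * A ^ (m+1) = 0) : M * A ^ m = 0 := by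
  set A1 : Mat n := (A ^ m)ᵀ with hA1
  set A2 : Mat n := (A ^ (m+1))ᵀ with hA2
  have hfac : A2 = Aᵀ * A1 := by
    rw [hA1, hA2, pow_succ, Matrix.transpose_mul]
  have hle : LinearMap.ker A1.mulVecLin ≤ LinearMap.ker A2.mulVecLin := by
    intro v hv
    simp only [LinearMap.mem_ker, Matrix.mulVecLin_apply] at hv ⊢
    rw [hfac, ← Matrix.mulVec_mulVec, hv, Matrix.mulVec_zero]
  have hr1 : A1.rank = A2.rank := by
    rw [hA1, hA2, Matrix.rank_transpose, Matrix.rank_transpose, hrk]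
  have hd1 : A1.rank + Module.finrank ℝ (LinearMap.ker A1.mulVecLin) = n := by
    rw [show A1.rank = Module.finrank ℝ (LinearMap.range A1.mulVecLin) from rfl,
      LinearMap.finrank_range_add_finrank_ker]
    simp
  have hd2 : A2.rank + Module.finrank ℝ (LinearMap.ker A2.mulVecLin) = n := by
    rw [show A2.rank = Module.finrank ℝ (LinearMap.range A2.mulVecLin) from rfl,
      LinearMap.finrank_range_add_finrank_ker]
    simp
  have hfr : Module.finrank ℝ (LinearMap.ker A2.mulVecLin)
      ≤ Module.finrank ℝ (LinearMap.ker A1.mulVecLin) := by omega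
  have heq := Submodule.eq_of_le_of_finrank_le hle hfr
  ext i j
  have hv2 : A2.mulVecLin (M i) = 0 := by
    ext k
    simp only [Matrix.mulVecLin_apply, Matrix.mulVec, dotProduct, hA2,
      Matrix.transpose_apply, Pi.zero_apply]
    have := congrFun (congrFun h0 i) k
    simp only [Matrix.mul_apply, Matrix.zero_apply] at this
    rw [← this]
    exact Finset.sum_congr rfl (fun x _ => mul_comm _ _)
  have hv1 : M i ∈ LinearMap.ker A1.mulVecLin := by rw [heq]; exact hv2
  have hv1' : A1.mulVecLin (M i) = 0 := hv1
  have := congrFun hv1' j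
  simp only [Matrix.mulVecLin_apply, Matrix.mulVec, dotProduct, hA1,
    Matrix.transpose_apply, Pi.zero_apply] at this
  simp only [Matrix.mul_apply, Matrix.zero_apply]
  rw [← this]
  exact Finset.sum_congr rfl (fun x _ => mul_comm _ _)

lemma dpow_eq {n : ℕ} (A B : Mat n) (k : ℕ) :
    dpow (A, B) k = (A ^ k, ∑ i ∈ Finset.range k, A ^ (k - 1 - i) * B * A ^ i) := by
  induction k with
  | zero => simp [dpow]
  | succ k ih =>
    rw [dpow, ih, dmul]
    simp only
    refine Prod.ext ?_ ?_
    · simp [pow_succ']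
    · simp only
      rw [Finset.sum_range_succ (f := fun i => A ^ (k + 1 - 1 - i) * B * A ^ i)]
      rw [Finset.mul_sum]
      have : ∀ i ∈ Finset.range k,
          A * (A ^ (k - 1 - i) * B * A ^ i) = A ^ (k + 1 - 1 - i) * B * A ^ i := by
        intro i hi
        rw [Finset.mem_range] at hi
        have h1 : k + 1 - 1 - i = (k - 1 - i) + 1 := by omega
        rw [h1, pow_succ']; noncomm_ring
      rw [Finset.sum_congr rfl this]
      have h2 : k + 1 - 1 - k = 0 := by omega
      rw [h2, pow_zero, one_mul]

lemma pow_cep {n : ℕ} {A X : Mat n} (h2 : A * (X * X) = X) :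
    ∀ k, A ^ k * X ^ (k+1) = X := by
  intro k
  induction k with
  | zero => simp
  | succ k ih =>
    have e1 : X ^ (k+2) = X * X * X ^ k := by
      rw [show k + 2 = 2 + k by omega, pow_add, pow_two]
    calc A ^ (k+1) * X ^ (k+2) = (A ^ k * A) * (X * X * X ^ k) := by rw [pow_succ, e1]
      _ = A ^ k * (A * (X * X)) * X ^ k := by noncomm_ring
      _ = A ^ k * X * X ^ k := by rw [h2]
      _ = A ^ k * X ^ (k+1) := by rw [pow_succ']; noncomm_ring
      _ = X := ih

lemma pow_pull {n : ℕ} (A : Mat n) (m : ℕ) (Z : Mat n) :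
    A * (A ^ m * Z) = A ^ (m+1) * Z := by
  rw [← mul_assoc, ← pow_succ']

lemma cep_Q {n m : ℕ} {A X P : Mat n}
    (h1 : (A * X)ᵀ = A * X) (h2 : A * (X * X) = X) (h3 : X * A ^ (m+1) = A ^ m)
    (p1 : A ^ m * P * A ^ m = A ^ m) (p3 : (A ^ m * P)ᵀ = A ^ m * P) :
    A * X = A ^ m * P := by
  have hXm : A ^ m * X ^ (m+1) = X := pow_cep h2 m
  have f4 : (A * X) * A ^ m = A ^ m := by
    calc (A * X) * A ^ m = (A * X) * (X * A ^ (m+1)) := by rw [h3]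
      _ = (A * (X * X)) * A ^ (m+1) := by noncomm_ring
      _ = X * A ^ (m+1) := by rw [h2]
      _ = A ^ m := h3
  have f5 : (A * X) * (A ^ m * P) = A ^ m * P := by
    calc (A * X) * (A ^ m * P) = ((A * X) * A ^ m) * P := by noncomm_ring
      _ = A ^ m * P := by rw [f4]
  have hAX : A * X = A ^ m * (A * X ^ (m+1)) := by
    calc A * X = A * (A ^ m * X ^ (m+1)) := by rw [hXm]
      _ = A ^ (m+1) * X ^ (m+1) := by rw [pow_pull]
      _ = (A ^ m * A) * X ^ (m+1) := by rw [pow_succ]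
      _ = A ^ m * (A * X ^ (m+1)) := by noncomm_ring
  have f6 : (A ^ m * P) * (A * X) = A * X := by
    calc (A ^ m * P) * (A * X) = (A ^ m * P) * (A ^ m * (A * X ^ (m+1))) := by rw [← hAX]
      _ = (A ^ m * P * A ^ m) * (A * X ^ (m+1)) := by noncomm_ring
      _ = A ^ m * (A * X ^ (m+1)) := by rw [p1]
      _ = A * X := by rw [← hAX]
  have f5t : (A ^ m * P) * (A * X) = A ^ m * P := by
    have := congrArg Matrix.transpose f5
    rw [Matrix.transpose_mul, h1, p3] at this
    exact this
  rw [← f6, f5t]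

lemma cep_fix {n m : ℕ} {A X P : Mat n}
    (h2 : A * (X * X) = X) (h3 : X * A ^ (m+1) = A ^ m)
    (hq : A * X = A ^ m * P) : X * (A ^ m * P) = X := by
  have hXm : A ^ m * X ^ (m+1) = X := pow_cep h2 m
  calc X * (A ^ m * P) = X * (A * X) := by rw [hq]
    _ = X * (A * (A ^ m * X ^ (m+1))) := by rw [hXm]
    _ = X * (A ^ (m+1) * X ^ (m+1)) := by rw [pow_pull]
    _ = (X * A ^ (m+1)) * X ^ (m+1) := by noncomm_ring
    _ = A ^ m * X ^ (m+1) := by rw [h3]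
    _ = X := hXm

lemma cep_unique {n m : ℕ} {A P X X' : Mat n}
    (hker : ∀ M : Mat n, M * A ^ (m+1) = 0 → M * A ^ m = 0)
    (hX : IsCEP m A X) (hX' : IsCEP m A X')
    (p1 : A ^ m * P * A ^ m = A ^ m) (p3 : (A ^ m * P)ᵀ = A ^ m * P) :
    X = X' := by
  obtain ⟨x1, x2, x3⟩ := hX
  obtain ⟨y1, y2, y3⟩ := hX'
  have qX : A * X = A ^ m * P := cep_Q x1 x2 x3 p1 p3
  have qX' : A * X' = A ^ m * P := cep_Q y1 y2 y3 p1 p3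
  have hXfix : X * (A ^ m * P) = X := cep_fix x2 x3 qX
  have hX'fix : X' * (A ^ m * P) = X' := cep_fix y2 y3 qX'
  have hd : (X - X') * A ^ (m+1) = 0 := by rw [sub_mul, x3, y3, sub_self]
  have hdm : (X - X') * A ^ m = 0 := hker _ hd
  have : X - X' = 0 := by
    calc X - X' = (X - X') * (A ^ m * P) := by rw [sub_mul, hXfix, hX'fix]
      _ = ((X - X') * A ^ m) * P := by noncomm_ring
      _ = 0 := by rw [hdm, zero_mul]
  exact sub_eq_zero.mp this

lemma AcA_fix {n m : ℕ} {A Ac P : Mat n} (a3 : Ac * A ^ (m+1) = A ^ m)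
    {M : Mat n} (hM : (A ^ m * P) * M = M) : Ac * (A * M) = M := by
  calc Ac * (A * M) = Ac * (A * (A ^ m * (P * M))) := by rw [← mul_assoc (A ^ m) P M, hM]
    _ = Ac * (A ^ (m+1) * (P * M)) := by rw [pow_pull]
    _ = (Ac * A ^ (m+1)) * (P * M) := by noncomm_ring
    _ = A ^ m * (P * M) := by rw [a3]
    _ = M := by rw [← mul_assoc, hM]

theorem stmt9 {n m : ℕ} (A B : Mat n) (hm : MatIndex A m)
    (S : Mat n) (hS : S = ∑ i ∈ Finset.range m, A ^ (m - 1 - i) * B * A ^ i)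
    (Ac : Mat n) (hAc : IsCEP m A Ac)
    (P : Mat n) (hP : IsMP (A ^ m) P)
    (Xh : DM n) (hXh : IsDualCEP m (A, B) Xh) :
    Xh = (Ac, -(Ac * B * Ac)) ↔ (1 - A ^ m * P) * S = 0 := by
  obtain ⟨X, Y⟩ := Xh
  obtain ⟨p1, p2, p3, p4⟩ := hP
  obtain ⟨a1, a2, a3⟩ := hAc
  have hker : ∀ M : Mat n, M * A ^ (m+1) = 0 → M * A ^ m = 0 := ker_step hm.1
  set Q : Mat n := A ^ m * P with hQdef
  -- basic facts about Ac and Q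
  have hQ : A * Ac = Q := cep_Q a1 a2 a3 p1 p3
  have hApow : A ^ m * Ac ^ (m+1) = Ac := pow_cep a2 m
  have hQAc : Q * Ac = Ac := by
    rw [← hQ, mul_assoc, a2]
  have hAcQ : Ac * Q = Ac := by
    have h := cep_fix a2 a3 hQ
    rw [← hQdef] at h
    exact h
  have hQAm : Q * A ^ m = A ^ m := by
    rw [← hQ]
    calc (A * Ac) * A ^ m = (A * Ac) * (Ac * A ^ (m+1)) := by rw [a3]
      _ = (A * (Ac * Ac)) * A ^ (m+1) := by noncomm_ring
      _ = Ac * A ^ (m+1) := by rw [a2]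
      _ = A ^ m := a3
  have hpAm : (1 - Q) * A ^ m = 0 := by rw [sub_mul, one_mul, hQAm, sub_self]
  have hpAc : (1 - Q) * Ac = 0 := by rw [sub_mul, one_mul, hQAc, sub_self]
  -- component equations of hXh
  obtain ⟨he1, he2, he3⟩ := hXh
  rw [dpow_eq, dpow_eq] at he3
  simp only [dmul, dT, Prod.mk.injEq, Nat.add_sub_cancel] at he1 he2 he3
  obtain ⟨e1r, e1d⟩ := he1
  obtain ⟨e2r, e2d⟩ := he2
  obtain ⟨e3r, e3d⟩ := he3
  rw [← hS] at e3d
  -- the real part is Ac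
  have hXAc : X = Ac := cep_unique hker ⟨e1r, e2r, e3r⟩ ⟨a1, a2, a3⟩ p1 p3
  rw [hXAc] at e1d e2d e3d
  rw [hXAc]
  -- Sm1 = A * S + B * A^m
  have hSm1 : ∑ i ∈ Finset.range (m+1), A ^ (m - i) * B * A ^ i = A * S + B * A ^ m := by
    rw [Finset.sum_range_succ, hS, Finset.mul_sum]
    have : ∀ i ∈ Finset.range m,
        A * (A ^ (m - 1 - i) * B * A ^ i) = A ^ (m - i) * B * A ^ i := by
      intro i hi
      rw [Finset.mem_range] at hi
      have h1 : m - i = (m - 1 - i) + 1 := by omega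
      rw [h1, pow_succ']; noncomm_ring
    rw [Finset.sum_congr rfl this, Nat.sub_self, pow_zero, one_mul]
  rw [hSm1] at e3d
  constructor
  · -- forward direction
    rintro h
    rw [Prod.mk.injEq] at h
    obtain ⟨-, hY⟩ := h
    have hpY : (1 - Q) * Y = 0 := by
      have hre : (1 - Q) * (Ac * B * Ac) = ((1 - Q) * Ac) * (B * Ac) := by noncomm_ring
      rw [hY, mul_neg, hre, hpAc, zero_mul, neg_zero]
    calc (1 - Q) * S = (1 - Q) * (Ac * (A * S + B * A ^ m) + Y * A ^ (m+1)) := by rw [e3d]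
      _ = ((1 - Q) * Ac) * (A * S + B * A ^ m) + ((1 - Q) * Y) * A ^ (m+1) := by noncomm_ring
      _ = 0 := by rw [hpAc, hpY, zero_mul, zero_mul, add_zero]
  · -- backward direction
    intro hcond
    have hQS : Q * S = S := by
      have h' : S - Q * S = 0 := by rw [← hcond]; noncomm_ring
      exact (sub_eq_zero.mp h').symm
    -- (1-Q) * (A * Q) = 0
    have hAQ : A * Q = A ^ (m+1) * P := by rw [hQdef, pow_pull]
    have hQAQ : (1 - Q) * (A * Q) = 0 := by
      have hQA1 : Q * A ^ (m+1) = A ^ (m+1) := by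
        rw [pow_succ, ← mul_assoc, hQAm]
      have hq : Q * (A * Q) = A * Q := by
        calc Q * (A * Q) = Q * (A ^ (m+1) * P) := by rw [hAQ]
          _ = (Q * A ^ (m+1)) * P := by noncomm_ring
          _ = A ^ (m+1) * P := by rw [hQA1]
          _ = A * Q := by rw [hAQ]
      rw [sub_mul, one_mul, hq, sub_self]
    have hterm : ∀ M : Mat n, ((1 - Q) * A) * ((1 - Q) * M) = (1 - Q) * (A * M) := by
      intro M
      have h0 : ((1 - Q) * A) * (1 - Q) = (1 - Q) * A := by
        calc ((1 - Q) * A) * (1 - Q) = (1 - Q) * A - (1 - Q) * (A * Q) := by noncomm_ring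
          _ = (1 - Q) * A := by rw [hQAQ, sub_zero]
      calc ((1 - Q) * A) * ((1 - Q) * M) = (((1 - Q) * A) * (1 - Q)) * M := by noncomm_ring
        _ = ((1 - Q) * A) * M := by rw [h0]
        _ = (1 - Q) * (A * M) := by rw [mul_assoc]
    -- telescoping: (1-Q) * (B * A^m) = 0
    have hpBAm : (1 - Q) * (B * A ^ m) = 0 := by
      have h1 : ((1 - Q) * S) * A
          = ∑ i ∈ Finset.range m, (1 - Q) * (A ^ (m - (i+1)) * B * A ^ (i+1)) := by
        rw [hS, Finset.mul_sum, Finset.sum_mul]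
        refine Finset.sum_congr rfl (fun i hi => ?_)
        rw [Finset.mem_range] at hi
        have h2 : m - (i+1) = m - 1 - i := by omega
        rw [h2, pow_succ]; noncomm_ring
      have h2 : ((1 - Q) * A) * ((1 - Q) * S)
          = ∑ i ∈ Finset.range m, (1 - Q) * (A ^ (m - i) * B * A ^ i) := by
        rw [hS, Finset.mul_sum, Finset.mul_sum]
        refine Finset.sum_congr rfl (fun i hi => ?_)
        rw [Finset.mem_range] at hi
        rw [hterm]
        have h3 : m - i = (m - 1 - i) + 1 := by omega
        rw [h3, pow_succ']; noncomm_ring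
      have h4 : ((1 - Q) * S) * A - ((1 - Q) * A) * ((1 - Q) * S)
          = (1 - Q) * (A ^ (m - m) * B * A ^ m) - (1 - Q) * (A ^ (m - 0) * B * A ^ 0) := by
        rw [h1, h2, ← Finset.sum_sub_distrib]
        exact Finset.sum_range_sub (f := fun j => (1 - Q) * (A ^ (m - j) * B * A ^ j)) m
      rw [hcond, zero_mul, mul_zero, Nat.sub_self, Nat.sub_zero, pow_zero, one_mul,
        mul_one] at h4
      have h5 : (1 - Q) * (A ^ m * B) = 0 := by
        rw [← mul_assoc, hpAm, zero_mul]
      rw [h5, sub_zero] at h4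
      simpa using h4.symm
    have hQBAc : Q * (B * Ac) = B * Ac := by
      have h6 : (1 - Q) * (B * Ac) = 0 := by
        calc (1 - Q) * (B * Ac) = (1 - Q) * (B * (A ^ m * Ac ^ (m+1))) := by rw [hApow]
          _ = ((1 - Q) * (B * A ^ m)) * Ac ^ (m+1) := by noncomm_ring
          _ = 0 := by rw [hpBAm, zero_mul]
      have h7 : B * Ac - Q * (B * Ac) = 0 := by rw [← h6]; noncomm_ring
      exact (sub_eq_zero.mp h7).symm
    -- Y0 facts
    set Y0 : Mat n := -(Ac * B * Ac) with hY0def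
    have hAY0 : A * Y0 = -(B * Ac) := by
      have hre : A * (Ac * B * Ac) = (A * Ac) * (B * Ac) := by noncomm_ring
      rw [hY0def, mul_neg, hre, hQ, hQBAc]
    have hY0A : Y0 * A ^ (m+1) = -(Ac * (B * A ^ m)) := by
      have hre : (Ac * B * Ac) * A ^ (m+1) = (Ac * B) * (Ac * A ^ (m+1)) := by noncomm_ring
      rw [hY0def, neg_mul, hre, a3, mul_assoc]
    have hY0_3 : Ac * (A * S + B * A ^ m) + Y0 * A ^ (m+1) = S := by
      have hAcAS : Ac * (A * S) = S := AcA_fix a3 hQS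
      rw [mul_add, hAcAS, hY0A]
      abel
    have hY0_2 : A * (Ac * Y0 + Y0 * Ac) + B * (Ac * Ac) = Y0 := by
      have hAAcY0 : A * (Ac * Y0) = Y0 := by
        rw [hY0def, mul_neg, mul_neg]
        congr 1
        calc A * (Ac * (Ac * B * Ac)) = (A * (Ac * Ac)) * (B * Ac) := by noncomm_ring
          _ = Ac * (B * Ac) := by rw [a2]
          _ = Ac * B * Ac := by rw [mul_assoc]
      have hAY0Ac : A * (Y0 * Ac) = -(B * (Ac * Ac)) := by
        rw [← mul_assoc, hAY0]; noncomm_ring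
      rw [mul_add, hAAcY0, hAY0Ac]
      abel
    have hY0_1 : A * Y0 + B * Ac = 0 := by rw [hAY0]; abel
    -- difference D = Y - Y0 vanishes
    have d3 : (Y - Y0) * A ^ (m+1) = 0 := by
      have hy : Y * A ^ (m+1) = S - Ac * (A * S + B * A ^ m) := eq_sub_of_add_eq' e3d
      have hy0 : Y0 * A ^ (m+1) = S - Ac * (A * S + B * A ^ m) := eq_sub_of_add_eq' hY0_3
      rw [sub_mul, hy, hy0, sub_self]
    have dm : (Y - Y0) * A ^ m = 0 := hker _ d3
    have dQ : (Y - Y0) * Q = 0 := by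
      rw [hQdef, ← mul_assoc, dm, zero_mul]
    have dAc : (Y - Y0) * Ac = 0 := by
      rw [← hQAc, ← mul_assoc, dQ, zero_mul]
    have d2 : A * (Ac * (Y - Y0) + (Y - Y0) * Ac) = Y - Y0 := by
      have hy : A * (Ac * Y + Y * Ac) = Y - B * (Ac * Ac) := eq_sub_of_add_eq e2d
      have hy0 : A * (Ac * Y0 + Y0 * Ac) = Y0 - B * (Ac * Ac) := eq_sub_of_add_eq hY0_2
      calc A * (Ac * (Y - Y0) + (Y - Y0) * Ac)
          = A * (Ac * Y + Y * Ac) - A * (Ac * Y0 + Y0 * Ac) := by noncomm_ring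
        _ = (Y - B * (Ac * Ac)) - (Y0 - B * (Ac * Ac)) := by rw [hy, hy0]
        _ = Y - Y0 := by noncomm_ring
    have d1 : (A * (Y - Y0))ᵀ = A * (Y - Y0) := by
      have hrepr : A * (Y - Y0) = (A * Y + B * Ac) - (A * Y0 + B * Ac) := by noncomm_ring
      rw [hrepr, Matrix.transpose_sub, e1d, hY0_1, Matrix.transpose_zero]
    have dQD : Q * (Y - Y0) = Y - Y0 := by
      have hsum : A * (Ac * (Y - Y0)) + A * ((Y - Y0) * Ac) = Y - Y0 := by
        rw [← mul_add]; exact d2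
      rw [dAc, mul_zero, add_zero, ← mul_assoc, hQ] at hsum
      exact hsum
    have dQAD : Q * (A * (Y - Y0)) = 0 := by
      have ht : (Q * (A * (Y - Y0)))ᵀ = 0 := by
        rw [Matrix.transpose_mul, d1, p3]
        calc (A * (Y - Y0)) * Q = A * ((Y - Y0) * Q) := by rw [mul_assoc]
          _ = 0 := by rw [dQ, mul_zero]
      have := congrArg Matrix.transpose ht
      rw [Matrix.transpose_transpose, Matrix.transpose_zero] at this
      exact this
    have dAcAD : Ac * (A * (Y - Y0)) = 0 := by
      rw [← hAcQ, mul_assoc, dQAD, mul_zero]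
    have dD : Y - Y0 = 0 := by
      have := AcA_fix a3 dQD
      rw [← this]
      exact dAcAD
    rw [Prod.mk.injEq]
    exact ⟨rfl, sub_eq_zero.mp dD⟩
end

section
/- Let Â = A + εB be a dual real n×n matrix with index of A equal to m. If the dual Drazin inverse of Â exists and equals A^D − ε A^D B A^D, then the dual core-EP inverse of Â exists and equals A^⊕ − ε A^⊕ B A^⊕. -/
open Matrix

/-- `X` is the Drazin inverse of `A` (with `m` the index of `A`). -/
def IsDrazin {n : ℕ} (m : ℕ) (A X : Mat n) : Prop :=
  X * A ^ (m+1) = A ^ m ∧ X * A * X = X ∧ A * X = X * A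

/-- `Xh` is a dual Drazin inverse of the dual matrix `Ah`. -/
def IsDualDrazin {n : ℕ} (m : ℕ) (Ah Xh : DM n) : Prop :=
  dmul Xh (dpow Ah (m+1)) = dpow Ah m ∧ dmul (dmul Xh Ah) Xh = Xh ∧
    dmul Ah Xh = dmul Xh Ah

lemma dpow_fst {n : ℕ} (X : DM n) (k : ℕ) : (dpow X k).1 = X.1 ^ k := by
  induction k with
  | zero => rfl
  | succ k ih => simp [dpow, dmul, ih, pow_succ']

lemma dpow_snd_succ {n : ℕ} (X : DM n) (k : ℕ) :
    (dpow X (k+1)).2 = X.1 * (dpow X k).2 + X.2 * X.1 ^ k := by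
  simp [dpow, dmul, dpow_fst]

lemma dpow_snd_succ' {n : ℕ} (X : DM n) (k : ℕ) :
    (dpow X (k+1)).2 = (dpow X k).2 * X.1 + X.1 ^ k * X.2 := by
  induction k with
  | zero => simp [dpow, dmul]
  | succ k ih =>
    have hsw : X.1 * (X.1 ^ k * X.2) = X.1 ^ k * (X.1 * X.2) := by
      rw [← mul_assoc, ← pow_succ', pow_succ, mul_assoc]
    calc (dpow X (k+2)).2 = X.1 * (dpow X (k+1)).2 + X.2 * X.1 ^ (k+1) := dpow_snd_succ _ _
      _ = X.1 * ((dpow X k).2 * X.1 + X.1 ^ k * X.2) + X.2 * X.1 ^ (k+1) := by rw [ih]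
      _ = (X.1 * (dpow X k).2 + X.2 * X.1 ^ k) * X.1 + X.1 ^ (k+1) * X.2 := by
          noncomm_ring
          rw [hsw]; abel
      _ = (dpow X (k+1)).2 * X.1 + X.1 ^ (k+1) * X.2 := by rw [← dpow_snd_succ]

lemma key {n : ℕ} (m : ℕ) (A B Ad Ac S : Mat n)
    (hd1 : Ad * A ^ (m+1) = A ^ m) (hd2 : Ad * A * Ad = Ad) (hd3 : A * Ad = Ad * A)
    (hc2 : A * (Ac * Ac) = Ac) (hc3 : Ac * A ^ (m+1) = A ^ m)
    (hrec : A * S + B * A ^ m = S * A + A ^ m * B)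
    (h1 : Ad * (A * S + B * A ^ m) + -(Ad * B * Ad) * A ^ (m+1) = S) :
    (A * -(Ac * B * Ac) + B * Ac = 0) ∧
    (A * (Ac * -(Ac * B * Ac) + -(Ac * B * Ac) * Ac) + B * (Ac * Ac) = -(Ac * B * Ac)) ∧
    (Ac * (A * S + B * A ^ m) + -(Ac * B * Ac) * A ^ (m+1) = S) := by
  have hco : Commute A Ad := hd3
  -- hPS : Ad * (A * S) = S
  have hPS : Ad * (A * S) = S := by
    have h1' := h1
    rw [mul_add, neg_mul, mul_assoc (Ad * B) Ad, hd1, mul_assoc] at h1'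
    rwa [add_neg_cancel_right] at h1'
  have hPS' : A * Ad * S = S := by rw [hd3, mul_assoc]; exact hPS
  -- A * Ad * A^m = A^m
  have hAdAm : A * Ad * A ^ m = A ^ m := by
    rw [hd3, mul_assoc, ← pow_succ', hd1]
  -- B * A^m is fixed by A * Ad on the left
  have t1 : A * Ad * (S * A) = S * A := by rw [← mul_assoc, hPS']
  have t2 : A * Ad * (A ^ m * B) = A ^ m * B := by rw [← mul_assoc, hAdAm]
  have t3 : A * Ad * (A * S) = A * S := by rw [mul_assoc, hPS]
  have hBAeq : B * A ^ m = S * A + A ^ m * B - A * S := eq_sub_of_add_eq' hrec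
  have hBA : A * Ad * (B * A ^ m) = B * A ^ m := by
    rw [hBAeq, mul_sub, mul_add, t1, t2, t3]
  -- A^(m+1) * Ad = A^m
  have hAmAd : A ^ (m+1) * Ad = A ^ m := ((hco.pow_left (m+1)).eq).trans hd1
  have hAcAmAd : Ac * A ^ m = A ^ m * Ad := by
    have h : Ac * (A ^ (m+1) * Ad) = A ^ m * Ad := by rw [← mul_assoc, hc3]
    have h2 : Ac * (A ^ (m+1) * Ad) = Ac * A ^ m := by rw [hAmAd]
    exact h2.symm.trans h
  have hQAm : A * Ac * A ^ m = A ^ m := by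
    rw [mul_assoc, hAcAmAd, ← mul_assoc, ← pow_succ', hAmAd]
  have hQAm1 : A * Ac * A ^ (m+1) = A ^ (m+1) := by
    rw [pow_succ, ← mul_assoc, hQAm]
  -- A * Ad idempotent, hence equals its (m+1)-st power
  have hid : (A * Ad) * (A * Ad) = A * Ad := by
    rw [mul_assoc, ← mul_assoc Ad A Ad, hd2]
  have hpowid : ∀ k : ℕ, (A * Ad) ^ (k+1) = A * Ad := by
    intro k
    induction k with
    | zero => rw [pow_one]
    | succ k ih => rw [pow_succ, ih, hid]
  have hE : A * Ad = A ^ (m+1) * Ad ^ (m+1) := (hpowid m).symm.trans (hco.mul_pow (m+1))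
  have hQP : A * Ac * (A * Ad) = A * Ad := by
    rw [hE, ← mul_assoc, hQAm1]
  have hQBA : A * Ac * (B * A ^ m) = B * A ^ m := by
    calc A * Ac * (B * A ^ m) = A * Ac * (A * Ad * (B * A ^ m)) := by rw [hBA]
      _ = A * Ac * (A * Ad) * (B * A ^ m) := by simp only [mul_assoc]
      _ = A * Ad * (B * A ^ m) := by rw [hQP]
      _ = B * A ^ m := hBA
  -- Ac = A^m * Ac^(m+1)
  have hAcrep : ∀ k : ℕ, Ac = A ^ k * Ac ^ (k+1) := by
    intro k
    induction k with
    | zero => simp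
    | succ k ih =>
      have step : Ac ^ (k+1) = A * Ac ^ (k+2) := by
        have h2 : Ac ^ (k+2) = Ac * Ac * Ac ^ k := by
          rw [pow_succ', pow_succ' Ac k, ← mul_assoc]
        rw [h2, ← mul_assoc, hc2, ← pow_succ']
      rw [pow_succ, mul_assoc, ← step, ← ih]
  have hAcm : Ac = A ^ m * Ac ^ (m+1) := hAcrep m
  have hBAc : B * Ac = B * A ^ m * Ac ^ (m+1) := by
    conv_lhs => rw [hAcm]
    rw [← mul_assoc]
  have hQBC : A * Ac * (B * Ac) = B * Ac := by
    calc A * Ac * (B * Ac) = A * Ac * (B * A ^ m * Ac ^ (m+1)) := by rw [← hBAc]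
      _ = A * Ac * (B * A ^ m) * Ac ^ (m+1) := by simp only [mul_assoc]
      _ = B * A ^ m * Ac ^ (m+1) := by rw [hQBA]
      _ = B * Ac := hBAc.symm
  -- S is fixed by Ac * A on the left
  have hS2 : A ^ (m+1) * Ad ^ (m+1) * S = S := by rw [← hE]; exact hPS'
  have hS3 : A ^ (m+1) * (Ad ^ (m+1) * S) = S := by rw [← mul_assoc]; exact hS2
  have hAcA1 : Ac * (A * A ^ (m+1)) = A ^ (m+1) := by
    rw [← pow_succ', pow_succ, ← mul_assoc, hc3, ← pow_succ]
  have hSfixAc : Ac * (A * S) = S := by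
    calc Ac * (A * S) = Ac * (A * (A ^ (m+1) * (Ad ^ (m+1) * S))) := by rw [hS3]
      _ = Ac * (A * A ^ (m+1)) * (Ad ^ (m+1) * S) := by simp only [mul_assoc]
      _ = A ^ (m+1) * (Ad ^ (m+1) * S) := by rw [hAcA1]
      _ = S := hS3
  refine ⟨?_, ?_, ?_⟩
  · -- K1
    have e0 : A * (Ac * B * Ac) = B * Ac := by
      rw [show A * (Ac * B * Ac) = A * Ac * (B * Ac) from by simp only [mul_assoc], hQBC]
    rw [mul_neg, e0, neg_add_cancel]
  · -- K2
    have e1 : A * (Ac * (Ac * B * Ac)) = Ac * B * Ac := by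
      rw [show Ac * (Ac * B * Ac) = (Ac * Ac) * (B * Ac) from by simp only [mul_assoc],
        ← mul_assoc, hc2, ← mul_assoc]
    have e2 : A * (Ac * B * Ac * Ac) = B * (Ac * Ac) := by
      rw [show A * (Ac * B * Ac * Ac) = A * Ac * (B * Ac) * Ac from by simp only [mul_assoc],
        hQBC, mul_assoc]
    rw [mul_neg, neg_mul, mul_add, mul_neg, mul_neg, e1, e2]
    abel
  · -- K3
    rw [mul_add, hSfixAc, neg_mul, mul_assoc (Ac * B) Ac, hc3, mul_assoc Ac B,
      add_neg_cancel_right]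
theorem stmt13 {n m : ℕ} (A B : Mat n) (hm : MatIndex A m)
    (Ad : Mat n) (hAd : IsDrazin m A Ad)
    (hdD : IsDualDrazin m (A, B) (Ad, -(Ad * B * Ad)))
    (Ac : Mat n) (hAc : IsCEP m A Ac) :
    IsDualCEP m (A, B) (Ac, -(Ac * B * Ac)) := by
  obtain ⟨hc1, hc2, hc3⟩ := hAc
  obtain ⟨hd1, hd2, hd3⟩ := hAd
  have hrec : A * (dpow ((A, B) : DM n) m).2 + B * A ^ m
      = (dpow ((A, B) : DM n) m).2 * A + A ^ m * B := by
    have h := (dpow_snd_succ ((A, B) : DM n) m).symm.trans (dpow_snd_succ' ((A, B) : DM n) m)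
    simpa using h
  have h1 : Ad * (A * (dpow ((A, B) : DM n) m).2 + B * A ^ m) + -(Ad * B * Ad) * A ^ (m+1)
      = (dpow ((A, B) : DM n) m).2 := by
    have h := congrArg Prod.snd hdD.1
    simp only [dmul] at h
    rw [dpow_snd_succ, dpow_fst] at h
    simpa using h
  obtain ⟨K1, K2, K3⟩ := key m A B Ad Ac _ hd1 hd2 hd3 hc2 hc3 hrec h1
  refine ⟨?_, ?_, ?_⟩
  · simp only [dmul, dT]
    refine Prod.ext ?_ ?_
    · exact hc1
    · show (A * -(Ac * B * Ac) + B * Ac)ᵀ = A * -(Ac * B * Ac) + B * Ac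
      rw [K1, transpose_zero]
  · simp only [dmul]
    exact Prod.ext hc2 K2
  · simp only [dmul]
    refine Prod.ext ?_ ?_
    · show Ac * (dpow ((A, B) : DM n) (m+1)).1 = (dpow ((A, B) : DM n) m).1
      rw [dpow_fst, dpow_fst]
      exact hc3
    · show Ac * (dpow ((A, B) : DM n) (m+1)).2 + -(Ac * B * Ac) * (dpow ((A, B) : DM n) (m+1)).1
          = (dpow ((A, B) : DM n) m).2
      rw [dpow_snd_succ, dpow_fst]
      exact K3
end

section
/- Let Â = A + εB be a dual real n×n matrix with index of A equal to m, such that the dual core-EP inverse Â^⊕ exists and Â^⊕ = A^⊕ − ε A^⊕ B A^⊕. Then the dual range spaces satisfy R(Â^⊕) = R(Â^m), where for a dual matrix M̂ = M + εM₀, R(M̂) = { M z + ε(M w + M₀ z) : z, w ∈ ℝⁿ }. -/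
open Matrix

/-- A dual vector `x + ε x₀` represented as the pair `(x, x₀)`. -/
abbrev DV (n : ℕ) := (Fin n → ℝ) × (Fin n → ℝ)

/-- Action of a dual matrix on a dual vector. -/
def dmulVec {n : ℕ} (M : DM n) (x : DV n) : DV n :=
  (M.1.mulVec x.1, M.1.mulVec x.2 + M.2.mulVec x.1)

/-- Dual range of a dual matrix. -/
def DRange {n : ℕ} (M : DM n) : Set (DV n) :=
  {y | ∃ z w : Fin n → ℝ, y = (M.1.mulVec z, M.1.mulVec w + M.2.mulVec z)}

lemma drange_sub {n : ℕ} (M N : DM n) (P Q : Mat n)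
    (h1 : N.1 = M.1 * P) (h2 : N.2 = M.1 * Q + M.2 * P) : DRange N ⊆ DRange M := by
  rintro y ⟨z, w, rfl⟩
  refine ⟨P.mulVec z, P.mulVec w + Q.mulVec z, ?_⟩
  simp only [h1, h2, Matrix.add_mulVec, Matrix.mulVec_add, ← Matrix.mulVec_mulVec,
    Prod.mk.injEq]
  exact ⟨trivial, by abel⟩

lemma dpow_fst_s14 {n : ℕ} (A B : Mat n) (k : ℕ) : (dpow (A, B) k).1 = A ^ k := by
  induction k with
  | zero => rfl
  | succ k ih => simp [dpow, dmul, ih, pow_succ']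

lemma cep_pow {n : ℕ} (A Ac : Mat n) (h : A * (Ac * Ac) = Ac) :
    ∀ k, A ^ k * Ac ^ (k + 1) = Ac := by
  intro k
  induction k with
  | zero => simp
  | succ k ih =>
    have : A ^ (k+1) * Ac ^ (k+2) = A * (A ^ k * Ac ^ (k+1) * Ac) := by
      rw [pow_succ Ac (k+1), pow_succ' A k]
      noncomm_ring
    rw [this, ih, ← mul_assoc] at *
    exact h

theorem stmt14 {n m : ℕ} (A B : Mat n) (hm : MatIndex A m)
    (Ac : Mat n) (hAc : IsCEP m A Ac)
    (hXh : IsDualCEP m (A, B) (Ac, -(Ac * B * Ac))) :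
    DRange ((Ac, -(Ac * B * Ac)) : DM n) = DRange (dpow (A, B) m) := by
  set X₀ : Mat n := -(Ac * B * Ac) with hX₀
  have hc1 : Ac * A ^ (m+1) = A ^ m := hAc.2.2
  have key : A ^ m * Ac ^ (m+1) = Ac := cep_pow A Ac hAc.2.1 m
  -- extract second component of the third dual condition
  have h3 := congrArg Prod.snd hXh.2.2
  simp only [dmul, dpow_fst_s14] at h3
  -- h3 : Ac * (dpow (A,B) (m+1)).2 + X₀ * A ^ (m+1) = (dpow (A,B) m).2
  set Sm : Mat n := (dpow (A, B) m).2 with hSm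
  set Sm1 : Mat n := (dpow (A, B) (m+1)).2 with hSm1
  apply Set.Subset.antisymm
  · -- DRange (Ac, X₀) ⊆ DRange (dpow (A,B) m)
    apply drange_sub (dpow (A, B) m) ((Ac, X₀) : DM n) (Ac ^ (m+1))
      (Ac ^ (m+1) * (B * Ac * (A ^ (m+1) * Ac ^ (m+1)) - B * Ac - Sm1 * Ac ^ (m+1)))
    · show Ac = (dpow (A, B) m).1 * Ac ^ (m+1)
      rw [dpow_fst_s14, key]
    · show X₀ = (dpow (A, B) m).1 * _ + Sm * Ac ^ (m+1)
      rw [dpow_fst_s14, ← mul_assoc, key, ← h3, hX₀]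
      noncomm_ring
  · -- DRange (dpow (A,B) m) ⊆ DRange (Ac, X₀)
    apply drange_sub ((Ac, X₀) : DM n) (dpow (A, B) m) (A ^ (m+1)) Sm1
    · show (dpow (A, B) m).1 = Ac * A ^ (m+1)
      rw [dpow_fst_s14, hc1]
    · show Sm = Ac * Sm1 + X₀ * A ^ (m+1)
      rw [← h3]
end

section
/- Let Â = A + εB be a dual real n×n matrix with index of A equal to m, such that the dual core-EP inverse exists and equals A^⊕ − ε A^⊕ B A^⊕. Then for any dual vector b̂, the equation Â Â^⊕ x̂ = Â^⊕ b̂ has a unique solution x̂ in the dual range R(Â^m), namely x̂ = Â^⊕ b̂. -/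
open Matrix

lemma dmul_assoc' {n : ℕ} (X Y Z : DM n) : dmul (dmul X Y) Z = dmul X (dmul Y Z) := by
  simp [dmul, mul_add, add_mul, mul_assoc]; abel

lemma dmul_one' {n : ℕ} (X : DM n) : dmul X ((1,0) : DM n) = X := by
  simp [dmul]

lemma one_dmul' {n : ℕ} (X : DM n) : dmul ((1,0) : DM n) X = X := by
  simp [dmul]

lemma dpow_succ' {n : ℕ} (X : DM n) (k : ℕ) : dpow X (k+1) = dmul (dpow X k) X := by
  induction k with
  | zero => simp [dpow, dmul_one', one_dmul']
  | succ k ih => rw [dpow, ih, ← dmul_assoc', ← dpow, ih]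

lemma dmulVec_dmul {n : ℕ} (M N : DM n) (x : DV n) :
    dmulVec (dmul M N) x = dmulVec M (dmulVec N x) := by
  simp [dmul, dmulVec, add_mulVec, mulVec_add, ← mulVec_mulVec]; abel_nf

lemma key_pow {n : ℕ} (Ah Xh : DM n) (h : dmul Ah (dmul Xh Xh) = Xh) :
    ∀ k, dmul (dpow Ah k) (dpow Xh (k+1)) = Xh := by
  intro k
  induction k with
  | zero => simp [dpow, one_dmul', dmul_one']
  | succ k ih =>
      rw [dpow, dpow_succ' Xh (k+1), dmul_assoc', ← dmul_assoc' (dpow Ah k), ih, h]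

lemma mem_DRange_iff {n : ℕ} (M : DM n) (y : DV n) :
    y ∈ DRange M ↔ ∃ u : DV n, y = dmulVec M u := by
  constructor
  · rintro ⟨z, w, rfl⟩; exact ⟨(z, w), rfl⟩
  · rintro ⟨u, rfl⟩; exact ⟨u.1, u.2, rfl⟩

theorem stmt19 {n m : ℕ} (A B : Mat n) (hm : MatIndex A m)
    (Ac : Mat n) (hAc : IsCEP m A Ac)
    (hXh : IsDualCEP m (A, B) (Ac, -(Ac * B * Ac))) :
    ∀ b : DV n,
      dmulVec (dmul (A, B) (Ac, -(Ac * B * Ac)))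
          (dmulVec ((Ac, -(Ac * B * Ac)) : DM n) b) =
        dmulVec ((Ac, -(Ac * B * Ac)) : DM n) b ∧
      dmulVec ((Ac, -(Ac * B * Ac)) : DM n) b ∈ DRange (dpow (A, B) m) ∧
      ∀ x ∈ DRange (dpow (A, B) m),
        dmulVec (dmul (A, B) (Ac, -(Ac * B * Ac))) x =
            dmulVec ((Ac, -(Ac * B * Ac)) : DM n) b →
          x = dmulVec ((Ac, -(Ac * B * Ac)) : DM n) b := by
  intro b
  set Ah : DM n := (A, B) with hAh
  set Xh : DM n := (Ac, -(Ac * B * Ac)) with hXhdef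
  obtain ⟨-, h1, h2⟩ := hXh
  have hproj : dmul (dmul Ah Xh) Xh = Xh := by rw [dmul_assoc', h1]
  refine ⟨?_, ?_, ?_⟩
  · rw [← dmulVec_dmul, hproj]
  · rw [mem_DRange_iff]
    exact ⟨dmulVec (dpow Xh (m+1)) b, by rw [← dmulVec_dmul, key_pow Ah Xh h1 m]⟩
  · intro x hx hEq
    rw [mem_DRange_iff, ← h2] at hx
    obtain ⟨u, rfl⟩ := hx
    rw [← hEq, dmulVec_dmul Xh, ← dmulVec_dmul (dmul Ah Xh), hproj]
end
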